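/- For each β ≥ 1 and σ > 0, the polynomial λ^{β+1} - λ^β - σ has a unique positive real root λ_0, and λ_0 strictly exceeds the modulus of every other complex root. -/

import Mathlib

/-- for β ≥ 1 and σ > 0, the polynomial λ^{β+1} - λ^β - σ has a
unique positive real root λ₀, which strictly exceeds the modulus of every
other complex root. -/
theorem stmt12 (β : ℕ) (hβ : 1 ≤ β) (σ : ℝ) (hσ : 0 < σ) :
    ∃ lam0 : ℝ, 0 < lam0 ∧ lam0 ^ (β + 1) - lam0 ^ β - σ = 0 ∧
      (∀ x : ℝ, 0 < x → x ^ (β + 1) - x ^ β - σ = 0 → x = lam0) ∧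
      (∀ z : ℂ, z ^ (β + 1) - z ^ β - (σ : ℂ) = 0 → z ≠ (lam0 : ℂ) →
        ‖z‖ < lam0) := by
  have e : ∀ x : ℝ, x ^ (β + 1) - x ^ β = x ^ β * (x - 1) := by
    intro x; rw [pow_succ]; ring
  -- strict monotonicity on [1, ∞)
  have key : ∀ a b : ℝ, 1 ≤ a → a < b →
      a ^ (β + 1) - a ^ β < b ^ (β + 1) - b ^ β := by
    intro a b ha hab
    have ha0 : (0:ℝ) < a ^ β := pow_pos (by linarith) β
    have h1 : a ^ β ≤ b ^ β := pow_le_pow_left₀ (by linarith) hab.le β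
    rw [e a, e b]
    calc a ^ β * (a - 1) < a ^ β * (b - 1) := by nlinarith
      _ ≤ b ^ β * (b - 1) := by nlinarith
  -- existence via IVT
  have hc : ContinuousOn (fun x : ℝ => x ^ (β + 1) - x ^ β - σ)
      (Set.Icc 1 (1 + σ)) := by fun_prop
  have hone' : (1:ℝ) ≤ (1 + σ) ^ β := by
    simpa using pow_le_pow_left₀ zero_le_one (by linarith : (1:ℝ) ≤ 1 + σ) β
  have hfM : (0:ℝ) ≤ (1 + σ) ^ (β + 1) - (1 + σ) ^ β - σ := by
    rw [e]; nlinarith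
  have hmem : (0:ℝ) ∈ Set.Icc ((1:ℝ) ^ (β + 1) - 1 ^ β - σ)
      ((1 + σ) ^ (β + 1) - (1 + σ) ^ β - σ) :=
    ⟨by simp; linarith, hfM⟩
  obtain ⟨lam0, hlam0mem, hroot⟩ :=
    intermediate_value_Icc (by linarith : (1:ℝ) ≤ 1 + σ) hc hmem
  have hroot' : lam0 ^ (β + 1) - lam0 ^ β - σ = 0 := hroot
  -- lam0 > 1
  have hlam1 : 1 < lam0 := by
    rcases lt_or_eq_of_le hlam0mem.1 with h | h
    · exact h
    · exfalso; rw [← h] at hroot'; simp at hroot'; linarith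
  have hlpos : 0 < lam0 := by linarith
  -- uniqueness
  have huniq : ∀ x : ℝ, 0 < x → x ^ (β + 1) - x ^ β - σ = 0 → x = lam0 := by
    intro x hx hxr
    have hx1 : 1 < x := by
      by_contra h
      push_neg at h
      have : x ^ β * (x - 1) ≤ 0 :=
        mul_nonpos_of_nonneg_of_nonpos (le_of_lt (pow_pos hx β)) (by linarith)
      rw [e] at hxr; linarith
    rcases lt_trichotomy x lam0 with h | h | h
    · have := key x lam0 hx1.le h; linarith
    · exact h
    · have := key lam0 x hlam1.le h; linarith
  refine ⟨lam0, hlpos, hroot', huniq, ?_⟩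
  -- complex roots
  intro z hz hne
  set r : ℝ := ‖z‖ with hr
  have hz0 : z ≠ 0 := by
    rintro rfl
    rw [zero_pow (by omega : β + 1 ≠ 0), zero_pow (by omega : β ≠ 0)] at hz
    simp at hz
    linarith
  have hrpos : 0 < r := norm_pos_iff.mpr hz0
  have hzeq : z ^ (β + 1) = z ^ β + (σ : ℂ) := by linear_combination hz
  have habs : r ^ (β + 1) ≤ r ^ β + σ := by
    have h1 : ‖z ^ (β + 1)‖ = r ^ (β + 1) := by simp [hr]
    have h2 : ‖z ^ β + (σ : ℂ)‖ ≤ r ^ β + σ := by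
      calc ‖z ^ β + (σ : ℂ)‖
          ≤ ‖z ^ β‖ + ‖(σ : ℂ)‖ := norm_add_le _ _
        _ = r ^ β + σ := by
            simp [hr, Complex.norm_real, abs_of_pos hσ]
    rw [← h1, hzeq]; exact h2
  -- r ≤ lam0
  have hrle : r ≤ lam0 := by
    by_contra h
    push_neg at h
    have := key lam0 r hlam1.le h
    linarith
  rcases lt_or_eq_of_le hrle with h | h
  · exact h
  · -- equality case: show z = lam0, contradiction
    exfalso
    have habsβ : ‖z ^ β‖ = lam0 ^ β := by
      rw [norm_pow, ← hr, h]
    have heq : ‖z ^ β + (σ:ℂ)‖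
        = ‖z ^ β‖ + ‖(σ:ℂ)‖ := by
      have h1 : ‖z ^ β + (σ:ℂ)‖ = lam0 ^ (β + 1) := by
        rw [← hzeq, norm_pow, ← hr, h]
      rw [h1, habsβ, Complex.norm_real, Real.norm_eq_abs, abs_of_pos hσ]
      linarith
    have hsr : SameRay ℝ (z ^ β) ((σ:ℂ)) := by
      by_contra hnr
      have := norm_add_lt_of_not_sameRay hnr
      linarith [heq ▸ le_refl ‖z ^ β + (σ:ℂ)‖]
    have hσc : ((σ:ℂ)) ≠ 0 := by exact_mod_cast hσ.ne'
    have hzβne : z ^ β ≠ 0 := pow_ne_zero β hz0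
    obtain ⟨t, ht, htt⟩ := hsr.exists_pos_left hzβne hσc
    have htc : (t:ℂ) * z ^ β = (σ:ℂ) := by
      simpa [Complex.real_smul] using htt
    have hzb' : z ^ β = ((σ / t : ℝ) : ℂ) := by
      push_cast
      rw [eq_div_iff (by exact_mod_cast ht.ne' : (t:ℂ) ≠ 0)]
      linear_combination htc
    have hpos : 0 < σ / t := div_pos hσ ht
    have hst : σ / t = lam0 ^ β := by
      rw [hzb', Complex.norm_real, Real.norm_eq_abs, abs_of_pos hpos] at habsβ
      exact habsβ
    have hzb : z ^ β = ((lam0 ^ β : ℝ) : ℂ) := by rw [hzb', hst]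
    -- now z * lam0^β = lam0^β + σ = lam0 * lam0^β
    have hre : lam0 * lam0 ^ β = lam0 ^ β + σ := by
      have hps : lam0 ^ (β + 1) = lam0 * lam0 ^ β := by rw [pow_succ]; ring
      linarith [hroot', hps]
    have hzz : z * ((lam0 ^ β : ℝ) : ℂ) = ((lam0 ^ β : ℝ) : ℂ) + (σ:ℂ) := by
      rw [← hzb, ← pow_succ']
      exact hzeq
    have h2 : (lam0:ℂ) * ((lam0 ^ β : ℝ):ℂ) = ((lam0 ^ β : ℝ):ℂ) + (σ:ℂ) := by
      exact_mod_cast congrArg Complex.ofReal hre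
    have hμ : ((lam0 ^ β : ℝ) : ℂ) ≠ 0 := by
      exact_mod_cast (pow_pos hlpos β).ne'
    exact hne (mul_right_cancel₀ hμ (hzz.trans h2.symm))
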